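/- For p ≥ 1, the polylogarithm satisfies Jonquière's inversion formula: Li_p(1/x) = (-1)^{p+1} Li_p(x) + (-1)^{p+1} (2πi)^p / p! · B_p(log x / (2πi)), for x in the open unit disk with Im(x) < 0, where log x = Log x + 2πi (Log being the principal branch) and Li_p(1/x) is defined by analytic continuation along a path from x to 1/x crossing the real axis once, not intersecting (1,∞), and avoiding 1. -/

import Mathlib

open Complex

/-- The slit plane `ℂ \ [1,∞)`, on which the analytic continuation of the
polylogarithm is single-valued. -/
def polylogDomain : Set ℂ := {z : ℂ | ¬ (z.im = 0 ∧ 1 ≤ z.re)}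

namespace JonquiereAux

open Set Filter Topology

lemma mem_polylogDomain_iff {z : ℂ} : z ∈ polylogDomain ↔ 1 - z ∈ slitPlane := by
  simp only [polylogDomain, mem_setOf_eq, Complex.mem_slitPlane_iff, sub_re, one_re, sub_im,
    one_im, zero_sub, neg_ne_zero]
  constructor
  · intro h
    rcases not_and_or.mp h with h | h
    · exact Or.inr h
    · exact Or.inl (by linarith [not_le.mp h])
  · rintro (h | h)
    · rintro ⟨_, h2⟩; linarith
    · rintro ⟨h1, _⟩; exact h h1

lemma isOpen_polylogDomain : IsOpen polylogDomain := by
  have : polylogDomain = (fun z : ℂ => 1 - z) ⁻¹' slitPlane := by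
    ext z; exact mem_polylogDomain_iff
  rw [this]
  exact isOpen_slitPlane.preimage (by continuity)

lemma isPreconnected_slitPlane' : IsPreconnected slitPlane := by
  have h : ContractibleSpace slitPlane :=
    starConvex_one_slitPlane.contractibleSpace ⟨1, one_mem_slitPlane⟩
  rw [isPreconnected_iff_preconnectedSpace]
  infer_instance

lemma isPreconnected_polylogDomain : IsPreconnected polylogDomain := by
  have : polylogDomain = (fun z : ℂ => 1 - z) '' slitPlane := by
    ext z
    constructor
    · intro hz; exact ⟨1 - z, mem_polylogDomain_iff.mp hz, by ring⟩
    · rintro ⟨w, hw, rfl⟩; rw [mem_polylogDomain_iff]; simpa using hw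
  rw [this]
  exact isPreconnected_slitPlane'.image _ (Continuous.continuousOn (by continuity))

lemma summable_aux {p : ℕ} (hp : 2 ≤ p) : Summable (fun k : ℕ => 1 / ((k : ℝ) + 1) ^ p) := by
  have h : Summable (fun n : ℕ => 1 / (n : ℝ) ^ p) :=
    (Real.summable_one_div_nat_pow).mpr (by omega)
  have := (summable_nat_add_iff 1).mpr h
  refine this.congr fun k => ?_
  push_cast
  ring_nf

lemma L_circle {p : ℕ} (hp : 2 ≤ p) {L : ℂ → ℂ}
    (hL : AnalyticOnNhd ℂ L polylogDomain)
    (hagree : ∀ z : ℂ, ‖z‖ < 1 → L z = ∑' k : ℕ, z ^ (k + 1) / ((k : ℂ) + 1) ^ p)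
    {w : ℂ} (hw : ‖w‖ = 1) (hw' : w ∈ polylogDomain) :
    L w = ∑' k : ℕ, w ^ (k + 1) / ((k : ℂ) + 1) ^ p := by
  have hcont : ContinuousAt L w := (hL w hw').continuousAt
  have h1 : Tendsto (fun r : ℝ => (r : ℂ) * w) (𝓝[<] (1 : ℝ)) (𝓝 w) := by
    have h2 : Tendsto (fun r : ℝ => (r : ℂ) * w) (𝓝 (1 : ℝ)) (𝓝 w) := by
      have := (Complex.continuous_ofReal.tendsto (1 : ℝ)).mul (tendsto_const_nhds (x := w))
      simpa using this
    exact h2.mono_left nhdsWithin_le_nhds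
  have hLlim : Tendsto (fun r : ℝ => L ((r : ℂ) * w)) (𝓝[<] (1 : ℝ)) (𝓝 (L w)) :=
    hcont.tendsto.comp h1
  have hflim : Tendsto (fun r : ℝ => ∑' k : ℕ, ((r : ℂ) * w) ^ (k + 1) / ((k : ℂ) + 1) ^ p)
      (𝓝[<] (1 : ℝ)) (𝓝 (∑' k : ℕ, w ^ (k + 1) / ((k : ℂ) + 1) ^ p)) := by
    apply tendsto_tsum_of_dominated_convergence (bound := fun k : ℕ => 1 / ((k : ℝ) + 1) ^ p)
      (summable_aux hp)
    · intro k
      have hc : Continuous (fun r : ℝ => ((r : ℂ) * w) ^ (k + 1) / ((k : ℂ) + 1) ^ p) := by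
        fun_prop
      have := (hc.tendsto 1).mono_left (nhdsWithin_le_nhds (s := Iio (1 : ℝ)))
      simpa using this
    · filter_upwards [Ioo_mem_nhdsLT_of_mem (by norm_num : (1:ℝ) ∈ Ioc (-1 : ℝ) 1)] with r hr k
      have h1 : ‖((r : ℂ) * w) ^ (k + 1) / ((k : ℂ) + 1) ^ p‖
          = |r| ^ (k + 1) / ((k : ℝ) + 1) ^ p := by
        rw [norm_div, norm_pow, norm_pow, norm_mul, Complex.norm_real, hw, mul_one]
        congr 2
        rw [show ((k : ℂ) + 1) = ((k + 1 : ℕ) : ℂ) by push_cast; ring, Complex.norm_natCast]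
        push_cast; ring
      rw [h1]
      have hr1 : |r| ≤ 1 := abs_le.mpr ⟨hr.1.le, hr.2.le⟩
      have : |r| ^ (k + 1) ≤ 1 := pow_le_one₀ (abs_nonneg r) hr1
      have hpos : (0:ℝ) < ((k : ℝ) + 1) ^ p := by positivity
      rw [div_le_div_iff₀ hpos hpos]
      nlinarith
  have heq : ∀ᶠ r : ℝ in 𝓝[<] (1 : ℝ),
      L ((r : ℂ) * w) = ∑' k : ℕ, ((r : ℂ) * w) ^ (k + 1) / ((k : ℂ) + 1) ^ p := by
    filter_upwards [Ioo_mem_nhdsLT_of_mem (by norm_num : (1:ℝ) ∈ Ioc (-1 : ℝ) 1)] with r hr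
    apply hagree
    rw [norm_mul, Complex.norm_real, hw, mul_one]
    exact abs_lt.mpr ⟨hr.1, hr.2⟩
  exact tendsto_nhds_unique (hLlim.congr' heq) hflim

lemma L_eq_neg_log {L : ℂ → ℂ} (hL : AnalyticOnNhd ℂ L polylogDomain)
    (hagree : ∀ z : ℂ, ‖z‖ < 1 → L z = ∑' k : ℕ, z ^ (k + 1) / ((k : ℂ) + 1) ^ 1)
    {z : ℂ} (hz : z ∈ polylogDomain) : L z = -Complex.log (1 - z) := by
  have hg : AnalyticOnNhd ℂ (fun z : ℂ => -Complex.log (1 - z)) polylogDomain := by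
    intro w hw
    exact (((analyticAt_const.sub analyticAt_id).clog (mem_polylogDomain_iff.mp hw))).neg
  have h0 : (0 : ℂ) ∈ polylogDomain := by simp [polylogDomain]
  have hfg : L =ᶠ[𝓝 (0 : ℂ)] fun z : ℂ => -Complex.log (1 - z) := by
    have hball : Metric.ball (0 : ℂ) 1 ∈ 𝓝 (0 : ℂ) := Metric.ball_mem_nhds _ one_pos
    filter_upwards [hball] with w hw
    have hw1 : ‖w‖ < 1 := by simpa using hw
    rw [hagree w hw1]
    have h := Complex.hasSum_taylorSeries_neg_log hw1
    have h3 : HasSum (fun n : ℕ => w ^ (n + 1) / ((n + 1 : ℕ) : ℂ))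
        (-Complex.log (1 - w) - ∑ i ∈ Finset.range 1, w ^ i / (i : ℂ)) :=
      (hasSum_nat_add_iff' 1).mpr h
    simp only [Finset.range_one, Finset.sum_singleton, pow_zero, Nat.cast_zero, div_zero,
      sub_zero] at h3
    have h2 : HasSum (fun k : ℕ => w ^ (k + 1) / ((k : ℂ) + 1) ^ 1) (-Complex.log (1 - w)) := by
      refine h3.congr_fun fun k => ?_
      push_cast; ring_nf
    exact h2.tsum_eq
  exact hL.eqOn_of_preconnected_of_eventuallyEq hg isPreconnected_polylogDomain h0 hfg hz

lemma log_branch {x : ℂ} (hxim : x.im < 0) :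
    Complex.log (1 - x⁻¹) = Complex.log (1 - x) - Complex.log x - Real.pi * I := by
  have hx0 : x ≠ 0 := by intro h; rw [h] at hxim; simp at hxim
  have hxinv_im : (0:ℝ) < (x⁻¹).im := by
    rw [Complex.inv_im]
    have h2 : 0 < Complex.normSq x := Complex.normSq_pos.mpr hx0
    apply div_pos (by linarith) h2
  have hlog1 : Complex.log (-x⁻¹) = -Complex.log x - Real.pi * I := by
    have hexp : Complex.exp (-Complex.log x - Real.pi * I) = -x⁻¹ := by
      rw [sub_eq_add_neg, Complex.exp_add, Complex.exp_neg, Complex.exp_log hx0,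
        Complex.exp_neg, Complex.exp_pi_mul_I]
      norm_num
    rw [← hexp, Complex.log_exp]
    · have harg : Complex.arg x < 0 := Complex.arg_neg_iff.mpr hxim
      have : (-Complex.log x - Real.pi * I).im = -Complex.arg x - Real.pi := by
        simp [Complex.log_im]
      rw [this]
      have := Real.pi_pos
      linarith
    · have harg2 : -Real.pi < Complex.arg x := Complex.neg_pi_lt_arg x
      have : (-Complex.log x - Real.pi * I).im = -Complex.arg x - Real.pi := by
        simp [Complex.log_im]
      rw [this]
      have := Real.pi_pos
      linarith
  have hfact : 1 - x⁻¹ = (1 - x) * (-x⁻¹) := by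
    field_simp
    ring
  have h1x : (1 - x) ≠ 0 := by
    intro h
    have : (1 - x).im = 0 := by rw [h]; simp
    simp only [Complex.sub_im, Complex.one_im, zero_sub] at this
    linarith
  have hargpos : 0 < Complex.arg (1 - x) := by
    have him : 0 < (1 - x).im := by simp [Complex.sub_im]; linarith
    rcases lt_trichotomy (Complex.arg (1 - x)) 0 with h | h | h
    · exact absurd (Complex.arg_neg_iff.mp h) (by linarith)
    · exact absurd (Complex.arg_eq_zero_iff.mp h).2 (by linarith)
    · exact h
  have harglt : Complex.arg (1 - x) < Real.pi :=
    Complex.arg_lt_pi_iff.mpr (Or.inr (by simp [Complex.sub_im]; linarith))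
  have hargneg : Complex.arg (-x⁻¹) < 0 := by
    apply Complex.arg_neg_iff.mpr
    simp only [Complex.neg_im]
    linarith
  have hmul : Complex.log ((1 - x) * (-x⁻¹)) = Complex.log (1 - x) + Complex.log (-x⁻¹) := by
    apply Complex.log_mul h1x (by simpa using inv_ne_zero hx0)
    constructor
    · have := Complex.neg_pi_lt_arg (-x⁻¹)
      linarith
    · linarith
  rw [hfact, hmul, hlog1]
  ring

lemma hasSum_shift {p : ℕ} (hp : 1 ≤ p) {z S : ℂ}
    (h : HasSum (fun k : ℕ => z ^ (k + 1) / ((k : ℂ) + 1) ^ p) S) :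
    HasSum (fun n : ℕ => z ^ n / (n : ℂ) ^ p) S := by
  have h2 : HasSum (fun n : ℕ => z ^ (n + 1) / ((n + 1 : ℕ) : ℂ) ^ p) S := by
    refine h.congr_fun fun k => ?_
    push_cast; ring_nf
  have h3 := (hasSum_nat_add_iff (f := fun n : ℕ => z ^ n / (n : ℂ) ^ p) 1).mp h2
  simpa [zero_pow (by omega : p ≠ 0)] using h3

lemma summable_circle {p : ℕ} (hp : 2 ≤ p) {z : ℂ} (hz : ‖z‖ = 1) :
    Summable (fun k : ℕ => z ^ (k + 1) / ((k : ℂ) + 1) ^ p) := by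
  apply Summable.of_norm
  refine (summable_aux hp).congr fun k => ?_
  rw [norm_div, norm_pow, hz, one_pow,
    show ((k : ℂ) + 1) = ((k + 1 : ℕ) : ℂ) by push_cast; ring, norm_pow, Complex.norm_natCast]
  push_cast; ring

lemma circle_point_eq {p : ℕ} (hp : 2 ≤ p) {L : ℂ → ℂ}
    (hL : AnalyticOnNhd ℂ L polylogDomain)
    (hagree : ∀ z : ℂ, ‖z‖ < 1 → L z = ∑' k : ℕ, z ^ (k + 1) / ((k : ℂ) + 1) ^ p)
    {y : ℝ} (hy : y ∈ Ioo (1/2 : ℝ) 1) :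
    L (Complex.exp (((2 * Real.pi * y : ℝ)) * I))⁻¹ =
      (-1) ^ (p + 1) * L (Complex.exp (((2 * Real.pi * y : ℝ)) * I)) +
      (-1) ^ (p + 1) * (2 * Real.pi * I) ^ p / (p.factorial : ℂ) *
        Polynomial.aeval
          ((Complex.log (Complex.exp (((2 * Real.pi * y : ℝ)) * I)) + 2 * Real.pi * I) /
            (2 * Real.pi * I))
          (Polynomial.bernoulli p) := by
  have hpi := Real.pi_pos
  set z := Complex.exp (((2 * Real.pi * y : ℝ)) * I) with hz
  have hzinv : z⁻¹ = Complex.exp (((-(2 * Real.pi * y) : ℝ)) * I) := by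
    rw [hz, ← Complex.exp_neg]
    congr 1
    push_cast; ring
  have hnorm : ‖z‖ = 1 := by
    rw [hz, Complex.norm_exp_ofReal_mul_I]
  have hnorminv : ‖z⁻¹‖ = 1 := by rw [norm_inv, hnorm]; norm_num
  have hsin : Real.sin (2 * Real.pi * y) < 0 := by
    rw [← Real.sin_sub_two_pi]
    apply Real.sin_neg_of_neg_of_neg_pi_lt
    · nlinarith [hy.2]
    · nlinarith [hy.1]
  have him : z.im < 0 := by
    rw [hz, Complex.exp_ofReal_mul_I_im]; exact hsin
  have himinv : 0 < (z⁻¹).im := by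
    rw [hzinv, Complex.exp_ofReal_mul_I_im, Real.sin_neg]; linarith
  have hzdom : z ∈ polylogDomain := by
    simp only [polylogDomain, mem_setOf_eq, not_and]; intro h; exact absurd h (by linarith)
  have hzinvdom : z⁻¹ ∈ polylogDomain := by
    simp only [polylogDomain, mem_setOf_eq, not_and]; intro h; exact absurd h (by linarith)
  have hSp : HasSum (fun n : ℕ => z ^ n / (n : ℂ) ^ p)
      (∑' k : ℕ, z ^ (k + 1) / ((k : ℂ) + 1) ^ p) :=
    hasSum_shift (by omega) (summable_circle hp hnorm).hasSum
  have hSm : HasSum (fun n : ℕ => (z⁻¹) ^ n / (n : ℂ) ^ p)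
      (∑' k : ℕ, (z⁻¹) ^ (k + 1) / ((k : ℂ) + 1) ^ p) :=
    hasSum_shift (by omega) (summable_circle hp hnorminv).hasSum
  set Sp := ∑' k : ℕ, z ^ (k + 1) / ((k : ℂ) + 1) ^ p
  set Sm := ∑' k : ℕ, (z⁻¹) ^ (k + 1) / ((k : ℂ) + 1) ^ p
  have hy01 : y ∈ Icc (0:ℝ) 1 := ⟨by linarith [hy.1], hy.2.le⟩
  have hfour := hasSum_one_div_nat_pow_mul_fourier hp hy01
  have hfour' : HasSum (fun n : ℕ => z ^ n / (n : ℂ) ^ p + (-1 : ℂ) ^ p * ((z⁻¹) ^ n / (n : ℂ) ^ p))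
      (-(2 * Real.pi * I) ^ p / (p.factorial : ℂ) * (bernoulliFun p y : ℂ)) := by
    refine hfour.congr_fun fun n => ?_
    have h1 : (fourier (n : ℤ)) (y : UnitAddCircle) = z ^ n := by
      rw [fourier_coe_apply, hz, ← Complex.exp_nat_mul]
      congr 1
      push_cast; ring
    have h2 : (fourier (-(n : ℤ))) (y : UnitAddCircle) = (z⁻¹) ^ n := by
      rw [fourier_coe_apply, hzinv, ← Complex.exp_nat_mul]
      congr 1
      push_cast; ring
    rw [h1, h2]
    ring
  have hcomb : HasSum (fun n : ℕ => z ^ n / (n : ℂ) ^ p + (-1 : ℂ) ^ p * ((z⁻¹) ^ n / (n : ℂ) ^ p))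
      (Sp + (-1 : ℂ) ^ p * Sm) := hSp.add (hSm.mul_left _)
  have hkey : Sp + (-1 : ℂ) ^ p * Sm
      = -(2 * Real.pi * I) ^ p / (p.factorial : ℂ) * (bernoulliFun p y : ℂ) :=
    hcomb.unique hfour'
  have hlog : Complex.log z = ((2 * Real.pi * (y - 1) : ℝ)) * I := by
    have hz2 : z = Complex.exp (((2 * Real.pi * (y - 1) : ℝ)) * I) := by
      rw [hz]
      have h3 : (((2 * Real.pi * y : ℝ)) : ℂ) * I
          = (((2 * Real.pi * (y - 1) : ℝ)) : ℂ) * I + 2 * Real.pi * I := by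
        push_cast; ring
      rw [h3, Complex.exp_add, Complex.exp_two_pi_mul_I, mul_one]
    rw [hz2, Complex.log_exp]
    · simp only [mul_I_im, ofReal_re]
      nlinarith [hy.1]
    · simp only [mul_I_im, ofReal_re]
      nlinarith [hy.2]
  have harg : (Complex.log z + 2 * Real.pi * I) / (2 * Real.pi * I) = (y : ℂ) := by
    have h4 : Complex.log z + 2 * Real.pi * I = 2 * Real.pi * I * (y : ℂ) := by
      rw [hlog]; push_cast; ring
    rw [h4, mul_div_cancel_left₀ _ two_pi_I_ne_zero]
  have hbern : (Polynomial.aeval ((y : ℝ) : ℂ) (Polynomial.bernoulli p))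
      = ((bernoulliFun p y : ℝ) : ℂ) := by
    have h5 : ((y : ℝ) : ℂ) = ((Algebra.ofId ℝ ℂ).restrictScalars ℚ) y := rfl
    rw [h5, Polynomial.aeval_algHom_apply]
    rw [bernoulliFun, Polynomial.eval_map, Polynomial.aeval_def]
    rfl
  have hLz : L z = Sp := L_circle hp hL hagree hnorm hzdom
  have hLzinv : L z⁻¹ = Sm := L_circle hp hL hagree hnorminv hzinvdom
  rw [hLz, hLzinv, harg, hbern]
  have hε : ((-1 : ℂ)) ^ p * ((-1 : ℂ)) ^ p = 1 := by
    rw [← pow_add, ← two_mul, pow_mul]; norm_num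
  have h5 : (-1 : ℂ) ^ p * Sm = -(2 * Real.pi * I) ^ p / (p.factorial : ℂ)
      * (bernoulliFun p y : ℂ) - Sp := by linear_combination hkey
  rw [pow_succ]
  linear_combination ((-1 : ℂ)) ^ p * h5 - Sm * hε

end JonquiereAux

section
open JonquiereAux Set Filter Topology


/-- Jonquière's inversion formula.  If `L` is the analytic continuation of the
polylogarithm `Li_p` (defined by its series on the unit disk) to `ℂ \ [1,∞)`,
then for `|x| < 1` with `Im x < 0` (so that the continuation from `x` to `1/x`
along a path crossing the real axis once to the left of `1` stays in `ℂ \ [1,∞)`,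
and the relevant branch of the logarithm is `Log x + 2πi`):
`Li_p(1/x) = (-1)^{p+1} Li_p(x) + (-1)^{p+1} (2πi)^p/p! · B_p(log x/(2πi))`. -/
theorem stmt2 (p : ℕ) (hp : 1 ≤ p) (L : ℂ → ℂ)
    (hL : AnalyticOn ℂ L polylogDomain)
    (hagree : ∀ z : ℂ, ‖z‖ < 1 → L z = ∑' k : ℕ, z ^ (k + 1) / ((k : ℂ) + 1) ^ p)
    (x : ℂ) (hx : ‖x‖ < 1) (hxim : x.im < 0) :
    L x⁻¹ = (-1) ^ (p + 1) * L x +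
      (-1) ^ (p + 1) * (2 * Real.pi * I) ^ p / (p.factorial : ℂ) *
        Polynomial.aeval ((Complex.log x + 2 * Real.pi * I) / (2 * Real.pi * I))
          (Polynomial.bernoulli p) := by
  have hLnhd : AnalyticOnNhd ℂ L polylogDomain :=
    (isOpen_polylogDomain.analyticOn_iff_analyticOnNhd).mp hL
  have hx0 : x ≠ 0 := by intro h; rw [h] at hxim; simp at hxim
  have hxinv_im : (0:ℝ) < (x⁻¹).im := by
    rw [Complex.inv_im]
    exact div_pos (by linarith) (Complex.normSq_pos.mpr hx0)
  have hxdom : x ∈ polylogDomain := by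
    simp only [polylogDomain, mem_setOf_eq, not_and]; intro h; exact absurd h (by linarith)
  have hxinvdom : x⁻¹ ∈ polylogDomain := by
    simp only [polylogDomain, mem_setOf_eq, not_and]; intro h; exact absurd h (by linarith)
  rcases eq_or_lt_of_le hp with h1 | h2
  · -- p = 1
    subst h1
    rw [L_eq_neg_log hLnhd hagree hxdom, L_eq_neg_log hLnhd hagree hxinvdom,
      log_branch hxim]
    have hb : (Polynomial.aeval ((Complex.log x + 2 * Real.pi * I) / (2 * Real.pi * I))
        (Polynomial.bernoulli 1))
        = (Complex.log x + 2 * Real.pi * I) / (2 * Real.pi * I) - 1/2 := by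
      simp [Polynomial.bernoulli_def, Finset.sum_range_succ]
      ring
    rw [hb]
    have h2πI : (2 * (Real.pi:ℂ) * I) ≠ 0 := two_pi_I_ne_zero
    field_simp
    ring
  · -- p ≥ 2
    have hp2 : 2 ≤ p := h2
    set U : Set ℂ := {z : ℂ | z.im < 0} with hU
    have hUopen : IsOpen U := isOpen_lt Complex.continuous_im continuous_const
    have hUpre : IsPreconnected U := (convex_halfSpace_im_lt 0).isPreconnected
    have hsub : U ⊆ polylogDomain := by
      intro z hz
      simp only [hU, mem_setOf_eq] at hz
      simp only [polylogDomain, mem_setOf_eq, not_and]; intro h; exact absurd h (by linarith)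
    have hLd : DifferentiableOn ℂ L polylogDomain := hLnhd.differentiableOn
    -- the two functions
    set F : ℂ → ℂ := fun z => L z⁻¹ with hF
    set G : ℂ → ℂ := fun z => (-1) ^ (p + 1) * L z +
      (-1) ^ (p + 1) * (2 * Real.pi * I) ^ p / (p.factorial : ℂ) *
        Polynomial.aeval ((Complex.log z + 2 * Real.pi * I) / (2 * Real.pi * I))
          (Polynomial.bernoulli p) with hG
    have hzne : ∀ z ∈ U, z ≠ 0 := by
      intro z hz h; simp only [hU, mem_setOf_eq] at hz; rw [h] at hz; simp at hz
    have hFa : AnalyticOnNhd ℂ F U := by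
      apply DifferentiableOn.analyticOnNhd _ hUopen
      apply hLd.comp (t := polylogDomain)
      · exact fun z hz => (differentiableAt_inv (hzne z hz)).differentiableWithinAt
      · intro z hz
        simp only [hU, mem_setOf_eq] at hz
        have : (0:ℝ) < (z⁻¹).im := by
          rw [Complex.inv_im]
          exact div_pos (by linarith) (Complex.normSq_pos.mpr (hzne z hz))
        simp only [polylogDomain, mem_setOf_eq, not_and]; intro h; exact absurd h (by linarith)
    have hGa : AnalyticOnNhd ℂ G U := by
      apply DifferentiableOn.analyticOnNhd _ hUopen
      apply DifferentiableOn.add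
      · exact (hLd.mono hsub).const_mul _
      · apply DifferentiableOn.const_mul
        have hpoly : Differentiable ℂ (fun w : ℂ =>
            (Polynomial.aeval w (Polynomial.bernoulli p) : ℂ)) := by
          have he : (fun w : ℂ => (Polynomial.aeval w (Polynomial.bernoulli p) : ℂ))
              = fun w : ℂ => Polynomial.eval w
                ((Polynomial.bernoulli p).map (algebraMap ℚ ℂ)) := by
            funext w
            rw [Polynomial.eval_map, Polynomial.aeval_def]
          rw [he]
          exact ((Polynomial.bernoulli p).map (algebraMap ℚ ℂ)).differentiable
        apply hpoly.comp_differentiableOn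
        apply DifferentiableOn.div_const
        apply DifferentiableOn.add_const
        intro z hz
        simp only [hU, mem_setOf_eq] at hz
        exact (differentiableAt_id.clog (Or.inr (by simpa using hz.ne))).differentiableWithinAt
    -- the accumulation point and sequence
    set z₀ : ℂ := Complex.exp (((2 * Real.pi * (3/4 : ℝ) : ℝ)) * I) with hz₀
    have hpi := Real.pi_pos
    have hz₀U : z₀ ∈ U := by
      simp only [hU, mem_setOf_eq, hz₀, Complex.exp_ofReal_mul_I_im]
      rw [← Real.sin_sub_two_pi]
      apply Real.sin_neg_of_neg_of_neg_pi_lt <;> nlinarith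
    set u : ℕ → ℂ := fun n =>
      Complex.exp (((2 * Real.pi * (3/4 + 1/((n:ℝ)+8)) : ℝ)) * I) with hu
    have hyn : ∀ n : ℕ, (3/4 + 1/((n:ℝ)+8)) ∈ Ioo (1/2 : ℝ) 1 := by
      intro n
      have h8 : (0:ℝ) < (n:ℝ) + 8 := by positivity
      have hle : 1/((n:ℝ)+8) ≤ 1/8 := by
        apply div_le_div_of_nonneg_left (by norm_num) (by norm_num)
        simp
      have hgt : 0 < 1/((n:ℝ)+8) := by positivity
      constructor <;> [linarith; linarith]
    have hune : ∀ n : ℕ, u n ≠ z₀ := by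
      intro n h
      rw [hu, hz₀] at h
      rw [Complex.exp_eq_exp_iff_exists_int] at h
      obtain ⟨m, hm⟩ := h
      have him := congrArg Complex.im hm
      simp only [Complex.add_im, mul_I_im, ofReal_re, Complex.mul_im, Complex.mul_re,
        Complex.intCast_re, Complex.intCast_im, Complex.ofReal_im, Complex.ofReal_re,
        Complex.I_im, Complex.I_re, Complex.re_ofNat, Complex.im_ofNat] at him
      have hmeq : 1/((n:ℝ)+8) = (m : ℝ) := by nlinarith [him]
      have hgt : 0 < 1/((n:ℝ)+8) := by positivity
      have hle : 1/((n:ℝ)+8) ≤ 1/8 := by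
        apply div_le_div_of_nonneg_left (by norm_num) (by norm_num)
        simp
      rcases Int.lt_or_le m 1 with hm1 | hm1
      · have : (m:ℝ) ≤ 0 := by exact_mod_cast Int.lt_add_one_iff.mp hm1
        linarith
      · have : (1:ℝ) ≤ (m:ℝ) := by exact_mod_cast hm1
        linarith
    have htend : Tendsto u atTop (𝓝[≠] z₀) := by
      apply tendsto_nhdsWithin_of_tendsto_nhds_of_eventually_within
      · have ht1 : Tendsto (fun n : ℕ => (3/4 + 1/((n:ℝ)+8))) atTop (𝓝 (3/4 : ℝ)) := by
          have h0 : Tendsto (fun n : ℕ => 1/((n:ℝ)+8)) atTop (𝓝 0) := by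
            simp only [one_div]
            exact Tendsto.comp tendsto_inv_atTop_zero
              (tendsto_atTop_add_const_right atTop 8 tendsto_natCast_atTop_atTop)
          have := (tendsto_const_nhds (x := (3/4:ℝ)) (f := atTop (α := ℕ))).add h0
          simpa using this
        have hc : Continuous (fun r : ℝ => Complex.exp (((2 * Real.pi * r : ℝ)) * I)) := by
          continuity
        exact (hc.tendsto (3/4 : ℝ)).comp ht1
      · exact Eventually.of_forall fun n => hune n
    have hfreq : ∃ᶠ z in 𝓝[≠] z₀, F z = G z := by
      apply htend.frequently
      apply Eventually.frequently
      apply Eventually.of_forall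
      intro n
      exact circle_point_eq hp2 hLnhd hagree (hyn n)
    have heqon : EqOn F G U :=
      hFa.eqOn_of_preconnected_of_frequently_eq hGa hUpre hz₀U hfreq
    exact heqon (show x ∈ U from hxim)
end
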